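/- Let d_A, d_B ≥ 1, let ρ be a positive definite density matrix on ℂ^{d_A} ⊗ ℂ^{d_B} (a positive definite (d_A·d_B)×(d_A·d_B) matrix of trace 1, with rows and columns indexed by pairs (i,j)), and let σ and τ be positive definite density matrices of sizes d_A and d_B respectively. Define the partial traces ρ_A (a d_A×d_A matrix with entries (ρ_A)_{i,i'} = Σ_{j=1}^{d_B} ρ_{(i,j),(i',j)}) and ρ_B (a d_B×d_B matrix with entries (ρ_B)_{j,j'} = Σ_{i=1}^{d_A} ρ_{(i,j),(i,j')}). Then S(ρ ‖ σ ⊗ τ) ≥ S(ρ ‖ ρ_A ⊗ ρ_B), where ⊗ is the Kronecker product and S(X ‖ Y) = Re Tr(X(log X − log Y)) is the quantum relative entropy with matrix logarithms defined by applying the natural logarithm to the eigenvalues in a spectral decomposition (with the convention log 0 = 0 on the kernel). The right-hand side equals the quantum mutual information I(A : B)_ρ. -/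

import Mathlib

open scoped ComplexOrder

open Matrix Kronecker

/-- The matrix logarithm of a Hermitian matrix via its spectral decomposition (applying the
real logarithm to the eigenvalues, with the junk convention `Real.log 0 = 0` on the kernel). -/
noncomputable def hermLog {n : Type*} [Fintype n] [DecidableEq n]
    {A : Matrix n n ℂ} (hA : A.IsHermitian) : Matrix n n ℂ :=
  (hA.eigenvectorUnitary : Matrix n n ℂ) *
    Matrix.diagonal (fun j => (Real.log (hA.eigenvalues j) : ℂ)) *
    star (hA.eigenvectorUnitary : Matrix n n ℂ)

lemma hermLog_eq_cfc {n : Type*} [Fintype n] [DecidableEq n]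
    {A : Matrix n n ℂ} (hA : A.IsHermitian) : hermLog hA = cfc Real.log A := by
  rw [hA.cfc_eq]; rfl

/-- Conjugation by a unitary as an `ℝ`-algebra homomorphism. -/
noncomputable def conjAlgHom {n : Type*} [Fintype n] [DecidableEq n]
    (W : Matrix n n ℂ) (hW : W ∈ unitary (Matrix n n ℂ)) :
    Matrix n n ℂ →ₐ[ℝ] Matrix n n ℂ where
  toFun X := W * X * star W
  map_one' := by
    show W * 1 * star W = 1
    rw [mul_one]; exact Unitary.mul_star_self_of_mem hW
  map_mul' X Y := by
    have h : star W * W = 1 := Unitary.star_mul_self_of_mem hW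
    calc W * (X * Y) * star W = (W * X) * (star W * W) * (Y * star W) := by
          rw [h, mul_one]; simp only [mul_assoc]
      _ = W * X * star W * (W * Y * star W) := by simp [mul_assoc]
  map_zero' := by simp
  map_add' X Y := by
    show W * (X + Y) * star W = W * X * star W + W * Y * star W
    rw [mul_add, add_mul]
  commutes' r := by
    simp only [Algebra.algebraMap_eq_smul_one]
    rw [mul_smul_comm, mul_one, smul_mul_assoc, Unitary.mul_star_self_of_mem hW]

lemma hermLog_conj {n : Type*} [Fintype n] [DecidableEq n]
    (W : Matrix n n ℂ) (hW : W ∈ unitary (Matrix n n ℂ)) (c : n → ℝ)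
    {A : Matrix n n ℂ} (hA : A.IsHermitian)
    (hAeq : A = W * Matrix.diagonal (fun i => (c i : ℂ)) * star W) :
    hermLog hA = W * Matrix.diagonal (fun i => (Real.log (c i) : ℂ)) * star W := by
  classical
  set S : Finset ℝ := Finset.image hA.eigenvalues Finset.univ ∪ Finset.image c Finset.univ with hS
  set q : Polynomial ℝ := Lagrange.interpolate S id Real.log with hqdef
  have hq : ∀ x ∈ S, q.eval x = Real.log x := by
    intro x hx
    exact Lagrange.eval_interpolate_at_node Real.log (Set.injOn_id _) hx
  have h1 : hermLog hA = cfc (fun x => q.eval x) A := by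
    rw [hermLog_eq_cfc hA]
    refine (cfc_congr ?_).symm
    intro x hx
    rw [Matrix.IsHermitian.spectrum_real_eq_range_eigenvalues hA] at hx
    obtain ⟨i, rfl⟩ := hx
    exact hq _ (Finset.mem_union_left _ (Finset.mem_image_of_mem _ (Finset.mem_univ i)))
  have hSA : IsSelfAdjoint A := hA
  have h2 : cfc (fun x => q.eval x) A = Polynomial.aeval A q := cfc_polynomial q A hSA
  have h4 : Polynomial.aeval (Matrix.diagonal (fun i => (c i : ℂ))) q
      = Matrix.diagonal (fun i => Polynomial.aeval ((c i : ℂ)) q) := by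
    have hd := Polynomial.aeval_algHom_apply (Matrix.diagonalAlgHom (n := n) ℝ)
      (fun i => (c i : ℂ)) q
    simp only [Matrix.diagonalAlgHom_apply] at hd
    rw [hd]
    exact congrArg Matrix.diagonal (funext fun i => (Polynomial.aeval_algHom_apply (Pi.evalAlgHom ℝ (fun _ => ℂ) i)
      (fun i => (c i : ℂ)) q).symm)
  have h5 : ∀ i, Polynomial.aeval ((c i : ℂ)) q = (Real.log (c i) : ℂ) := by
    intro i
    have := Polynomial.aeval_algHom_apply Complex.ofRealAm (c i) q
    simp only [Complex.ofRealAm_coe] at this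
    rw [this]
    norm_cast
    rw [Polynomial.coe_aeval_eq_eval]
    exact hq _ (Finset.mem_union_right _ (Finset.mem_image_of_mem _ (Finset.mem_univ i)))
  have h3 : Polynomial.aeval A q
      = W * Matrix.diagonal (fun i => (Real.log (c i) : ℂ)) * star W := by
    rw [hAeq]
    have := Polynomial.aeval_algHom_apply (conjAlgHom W hW)
      (Matrix.diagonal (fun i => (c i : ℂ))) q
    simp only [conjAlgHom, AlgHom.coe_mk, RingHom.coe_mk, MonoidHom.coe_mk, OneHom.coe_mk] at this
    rw [this, h4]
    rw [congrArg Matrix.diagonal (funext fun i => h5 i)]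
  rw [h1, h2, h3]

lemma kron_conjTranspose {l m n p : Type*} (A : Matrix l m ℂ) (B : Matrix n p ℂ) :
    (A ⊗ₖ B)ᴴ = Aᴴ ⊗ₖ Bᴴ := by
  ext ⟨i, j⟩ ⟨k, l⟩
  simp [Matrix.conjTranspose_apply, Matrix.kroneckerMap_apply, star_mul']

lemma hermLog_kron {m n : Type*} [Fintype m] [DecidableEq m] [Fintype n] [DecidableEq n]
    {σ : Matrix m m ℂ} {τ : Matrix n n ℂ} (hσ : σ.PosDef) (hτ : τ.PosDef)
    (h : (σ ⊗ₖ τ).IsHermitian) :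
    hermLog h = hermLog hσ.1 ⊗ₖ (1 : Matrix n n ℂ) + (1 : Matrix m m ℂ) ⊗ₖ hermLog hτ.1 := by
  set U : Matrix m m ℂ := (hσ.1.eigenvectorUnitary : Matrix m m ℂ) with hUdef
  set V : Matrix n n ℂ := (hτ.1.eigenvectorUnitary : Matrix n n ℂ) with hVdef
  have hU : U ∈ unitary (Matrix m m ℂ) := SetLike.coe_mem _
  have hV : V ∈ unitary (Matrix n n ℂ) := SetLike.coe_mem _
  have hstar : star (U ⊗ₖ V) = star U ⊗ₖ star V := by
    simp only [Matrix.star_eq_conjTranspose]; exact kron_conjTranspose U V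
  have hW : U ⊗ₖ V ∈ unitary (Matrix (m × n) (m × n) ℂ) := by
    rw [Unitary.mem_iff]
    constructor
    · rw [hstar, ← Matrix.mul_kronecker_mul, Unitary.star_mul_self_of_mem hU,
        Unitary.star_mul_self_of_mem hV, Matrix.one_kronecker_one]
    · rw [hstar, ← Matrix.mul_kronecker_mul, Unitary.mul_star_self_of_mem hU,
        Unitary.mul_star_self_of_mem hV, Matrix.one_kronecker_one]
  have heq : σ ⊗ₖ τ = (U ⊗ₖ V) *
      Matrix.diagonal (fun p : m × n => ((hσ.1.eigenvalues p.1 * hτ.1.eigenvalues p.2 : ℝ) : ℂ)) *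
      star (U ⊗ₖ V) := by
    have eσ : σ = U * Matrix.diagonal (fun i => ((hσ.1.eigenvalues i : ℝ) : ℂ)) * star U :=
      hσ.1.spectral_theorem
    have eτ : τ = V * Matrix.diagonal (fun i => ((hτ.1.eigenvalues i : ℝ) : ℂ)) * star V :=
      hτ.1.spectral_theorem
    conv_lhs => rw [eσ, eτ]
    rw [Matrix.mul_kronecker_mul, Matrix.mul_kronecker_mul, hstar,
      Matrix.diagonal_kronecker_diagonal]
    congr 2
    funext p
    push_cast
    rfl
  rw [hermLog_conj (U ⊗ₖ V) hW _ h heq]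
  have hlog : (fun p : m × n => ((Real.log (hσ.1.eigenvalues p.1 * hτ.1.eigenvalues p.2) : ℝ) : ℂ))
      = fun p : m × n => ((Real.log (hσ.1.eigenvalues p.1) : ℂ) * 1 +
        1 * (Real.log (hτ.1.eigenvalues p.2) : ℂ)) := by
    funext p
    rw [Real.log_mul (ne_of_gt (hσ.eigenvalues_pos p.1)) (ne_of_gt (hτ.eigenvalues_pos p.2))]
    push_cast; ring
  rw [hlog]
  have hdiag : Matrix.diagonal (fun p : m × n => ((Real.log (hσ.1.eigenvalues p.1) : ℂ) * 1 +
        1 * (Real.log (hτ.1.eigenvalues p.2) : ℂ)) )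
      = (Matrix.diagonal (fun i => (Real.log (hσ.1.eigenvalues i) : ℂ)) ⊗ₖ (1 : Matrix n n ℂ)) +
        ((1 : Matrix m m ℂ) ⊗ₖ Matrix.diagonal (fun j => (Real.log (hτ.1.eigenvalues j) : ℂ))) := by
    rw [← Matrix.diagonal_one, ← Matrix.diagonal_one, Matrix.diagonal_kronecker_diagonal,
      Matrix.diagonal_kronecker_diagonal, ← Matrix.diagonal_add]
  rw [hdiag, Matrix.mul_add, Matrix.add_mul]
  congr 1
  · rw [hstar, ← Matrix.mul_kronecker_mul, ← Matrix.mul_kronecker_mul, mul_one,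
      Unitary.mul_star_self_of_mem hV]
    rfl
  · rw [hstar, ← Matrix.mul_kronecker_mul, ← Matrix.mul_kronecker_mul, mul_one,
      Unitary.mul_star_self_of_mem hU]
    rfl

lemma klein_num {ι κ : Type*} [Fintype ι] [Fintype κ]
    (p : ι → ℝ) (q : κ → ℝ) (c : ι → κ → ℝ)
    (hp : ∀ i, 0 < p i) (hq : ∀ j, 0 < q j)
    (hc : ∀ i j, 0 ≤ c i j)
    (hrow : ∀ i, ∑ j, c i j = 1) (hcol : ∀ j, ∑ i, c i j = 1)
    (hp1 : ∑ i, p i = 1) (hq1 : ∑ j, q j = 1) :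
    ∑ i, ∑ j, p i * Real.log (q j) * c i j ≤ ∑ i, p i * Real.log (p i) := by
  set r : ι → ℝ := fun i => ∑ j, c i j * q j with hr
  have hrpos : ∀ i, 0 < r i := by
    intro i
    rcases lt_or_ge 0 (r i) with h | h
    · exact h
    · exfalso
      have hnn : ∀ j ∈ Finset.univ, (0:ℝ) ≤ c i j * q j :=
        fun j _ => mul_nonneg (hc i j) (hq j).le
      have h0 : r i = 0 := le_antisymm h (Finset.sum_nonneg hnn)
      have hz : ∀ j ∈ Finset.univ, c i j * q j = 0 :=
        (Finset.sum_eq_zero_iff_of_nonneg hnn).mp h0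
      have : ∑ j, c i j = 0 := Finset.sum_eq_zero fun j hj => by
        rcases mul_eq_zero.mp (hz j hj) with h' | h'
        · exact h'
        · exact absurd h' (ne_of_gt (hq j))
      rw [hrow i] at this
      norm_num at this
  have step1 : ∀ i, ∑ j, c i j * Real.log (q j) ≤ Real.log (r i) := by
    intro i
    have := (strictConcaveOn_log_Ioi.concaveOn).le_map_sum (t := Finset.univ)
      (w := c i) (p := q) (fun j _ => hc i j) (hrow i) (fun j _ => hq j)
    simpa [smul_eq_mul, hr] using this
  have step2 : ∀ i, Real.log (r i) ≤ Real.log (p i) + r i / p i - 1 := by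
    intro i
    have h := Real.log_le_sub_one_of_pos (div_pos (hrpos i) (hp i))
    rw [Real.log_div (ne_of_gt (hrpos i)) (ne_of_gt (hp i))] at h
    linarith
  have hrsum : ∑ i, r i = 1 := by
    rw [hr]
    rw [Finset.sum_comm]
    calc ∑ j, ∑ i, c i j * q j = ∑ j, (∑ i, c i j) * q j := by
          simp [Finset.sum_mul]
      _ = ∑ j, q j := by simp only [hcol, one_mul]
      _ = 1 := hq1
  calc ∑ i, ∑ j, p i * Real.log (q j) * c i j
      = ∑ i, p i * ∑ j, c i j * Real.log (q j) := by
        apply Finset.sum_congr rfl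
        intro i _
        rw [Finset.mul_sum]
        apply Finset.sum_congr rfl
        intro j _
        ring
    _ ≤ ∑ i, p i * Real.log (r i) :=
        Finset.sum_le_sum fun i _ => mul_le_mul_of_nonneg_left (step1 i) (hp i).le
    _ ≤ ∑ i, (p i * Real.log (p i) + r i - p i) := by
        apply Finset.sum_le_sum
        intro i _
        have h2 := mul_le_mul_of_nonneg_left (step2 i) (hp i).le
        have hpne : p i ≠ 0 := ne_of_gt (hp i)
        have hfield : p i * (Real.log (p i) + r i / p i - 1)
            = p i * Real.log (p i) + r i - p i := by
          field_simp
        linarith [h2, hfield ▸ h2]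
    _ = ∑ i, p i * Real.log (p i) := by
        rw [Finset.sum_sub_distrib, Finset.sum_add_distrib, hrsum, hp1]
        ring

lemma trace_conj_diag {n : Type*} [Fintype n] [DecidableEq n]
    (U : Matrix n n ℂ) (hU : U ∈ unitary (Matrix n n ℂ)) (d : n → ℂ) :
    Matrix.trace (U * Matrix.diagonal d * star U) = ∑ i, d i := by
  rw [Matrix.trace_mul_cycle, Unitary.star_mul_self_of_mem hU, one_mul,
    Matrix.trace_diagonal]

lemma conj_mul_conj {n : Type*} [Fintype n] [DecidableEq n]
    (U : Matrix n n ℂ) (hU : U ∈ unitary (Matrix n n ℂ)) (X Y : Matrix n n ℂ) :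
    (U * X * star U) * (U * Y * star U) = U * (X * Y) * star U := by
  have h : star U * U = 1 := Unitary.star_mul_self_of_mem hU
  have h2 : ∀ Z : Matrix n n ℂ, star U * (U * Z) = Z := fun Z => by
    rw [← mul_assoc, h, one_mul]
  simp only [mul_assoc, h2]

lemma klein {n : Type*} [Fintype n] [DecidableEq n]
    {P Q : Matrix n n ℂ} (hP : P.PosDef) (hQ : Q.PosDef)
    (hP1 : P.trace = 1) (hQ1 : Q.trace = 1) :
    (Matrix.trace (P * hermLog hQ.1)).re ≤ (Matrix.trace (P * hermLog hP.1)).re := by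
  classical
  set U : Matrix n n ℂ := (hP.1.eigenvectorUnitary : Matrix n n ℂ) with hUdef
  set V : Matrix n n ℂ := (hQ.1.eigenvectorUnitary : Matrix n n ℂ) with hVdef
  have hU : U ∈ unitary (Matrix n n ℂ) := SetLike.coe_mem _
  have hV : V ∈ unitary (Matrix n n ℂ) := SetLike.coe_mem _
  set p : n → ℝ := hP.1.eigenvalues with hpdef
  set q : n → ℝ := hQ.1.eigenvalues with hqdef
  have hPs : P = U * Matrix.diagonal (fun i => (p i : ℂ)) * star U := hP.1.spectral_theorem
  have hQs : Q = V * Matrix.diagonal (fun j => (q j : ℂ)) * star V := hQ.1.spectral_theorem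
  have hLP : hermLog hP.1 = U * Matrix.diagonal (fun i => (Real.log (p i) : ℂ)) * star U := rfl
  have hLQ : hermLog hQ.1 = V * Matrix.diagonal (fun j => (Real.log (q j) : ℂ)) * star V := rfl
  have hppos : ∀ i, 0 < p i := hP.eigenvalues_pos
  have hqpos : ∀ j, 0 < q j := hQ.eigenvalues_pos
  -- sum of eigenvalues is one
  have hp1 : ∑ i, p i = 1 := by
    have : Matrix.trace P = ∑ i, ((p i : ℂ)) := by rw [hPs] at hP1 ⊢; rw [trace_conj_diag U hU]
    rw [hP1] at this
    have := this.symm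
    exact_mod_cast this
  have hq1 : ∑ j, q j = 1 := by
    have : Matrix.trace Q = ∑ j, ((q j : ℂ)) := by rw [hQs] at hQ1 ⊢; rw [trace_conj_diag V hV]
    rw [hQ1] at this
    have := this.symm
    exact_mod_cast this
  -- the RHS
  have hrhs : (Matrix.trace (P * hermLog hP.1)).re = ∑ i, p i * Real.log (p i) := by
    rw [hLP]
    conv_lhs => rw [hPs]
    rw [conj_mul_conj U hU, Matrix.diagonal_mul_diagonal, trace_conj_diag U hU]
    push_cast
    rw [Complex.re_sum]
    apply Finset.sum_congr rfl
    intro i _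
    push_cast
    simp
  -- the LHS
  set W : Matrix n n ℂ := star U * V with hWdef
  have hWu : W ∈ unitary (Matrix n n ℂ) := mul_mem (Unitary.star_mem hU) hV
  set c : n → n → ℝ := fun i j => Complex.normSq (W i j) with hcdef
  have hsq : ∀ i j, W i j * star (W i j) = ((c i j : ℝ) : ℂ) := by
    intro i j
    rw [hcdef, Complex.star_def, Complex.mul_conj]
  have hlhs : (Matrix.trace (P * hermLog hQ.1)).re
      = ∑ i, ∑ j, p i * Real.log (q j) * c i j := by
    rw [hLQ]
    conv_lhs => rw [hPs]
    have hT : (U * Matrix.diagonal (fun i => (p i : ℂ)) * star U)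
        * (V * Matrix.diagonal (fun j => (Real.log (q j) : ℂ)) * star V)
        = U * (Matrix.diagonal (fun i => (p i : ℂ))
            * (W * Matrix.diagonal (fun j => (Real.log (q j) : ℂ)) * star W)) * star U := by
      rw [hWdef]
      simp only [StarMul.star_mul, star_star, mul_assoc]
      rw [Unitary.mul_star_self_of_mem hU, mul_one]
    rw [hT, Matrix.trace_mul_cycle, Unitary.star_mul_self_of_mem hU, one_mul]
    have key : Matrix.trace (Matrix.diagonal (fun i => (p i : ℂ))
        * (W * Matrix.diagonal (fun j => (Real.log (q j) : ℂ)) * star W))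
        = ∑ i, ∑ j, (p i : ℂ) * (W i j * (Real.log (q j) : ℂ) * star (W i j)) := by
      have e1 : ∀ (d : n → ℂ) (M : Matrix n n ℂ),
          Matrix.trace (Matrix.diagonal d * M) = ∑ i, d i * M i i := by
        intro d M
        simp [Matrix.trace, Matrix.diag_apply, Matrix.diagonal_mul]
      have e2 : ∀ i, (W * Matrix.diagonal (fun j => (Real.log (q j) : ℂ)) * star W) i i
          = ∑ j, W i j * (Real.log (q j) : ℂ) * star (W i j) := by
        intro i
        rw [Matrix.mul_apply]
        refine Finset.sum_congr rfl fun j _ => ?_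
        rw [Matrix.mul_diagonal, Matrix.star_apply]
      rw [e1]
      refine Finset.sum_congr rfl fun i _ => ?_
      rw [e2, Finset.mul_sum]
    rw [key, Complex.re_sum]
    apply Finset.sum_congr rfl
    intro i _
    rw [Complex.re_sum]
    apply Finset.sum_congr rfl
    intro j _
    have : (p i : ℂ) * (W i j * (Real.log (q j) : ℂ) * star (W i j))
        = ((p i * Real.log (q j) * c i j : ℝ) : ℂ) := by
      have h1 : W i j * (Real.log (q j) : ℂ) * star (W i j)
          = (Real.log (q j) : ℂ) * (W i j * star (W i j)) := by ring
      rw [h1, hsq i j]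
      push_cast
      ring
    rw [this, Complex.ofReal_re]
  rw [hlhs, hrhs]
  -- row and column sums
  have hrow : ∀ i, ∑ j, c i j = 1 := by
    intro i
    have h1 : W * star W = 1 := Unitary.mul_star_self_of_mem hWu
    have h2 := congrArg (fun M : Matrix n n ℂ => M i i) h1
    simp only [Matrix.mul_apply, Matrix.star_apply, Matrix.conjTranspose_apply,
      Matrix.one_apply_eq] at h2
    have h3 : ∑ j, ((c i j : ℝ) : ℂ) = 1 := by
      rw [← h2]
      exact Finset.sum_congr rfl fun j _ => (hsq i j).symm
    exact_mod_cast h3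
  have hcol : ∀ j, ∑ i, c i j = 1 := by
    intro j
    have h1 : star W * W = 1 := Unitary.star_mul_self_of_mem hWu
    have h2 := congrArg (fun M : Matrix n n ℂ => M j j) h1
    simp only [Matrix.mul_apply, Matrix.star_apply, Matrix.conjTranspose_apply,
      Matrix.one_apply_eq] at h2
    have h3 : ∑ i, ((c i j : ℝ) : ℂ) = 1 := by
      rw [← h2]
      refine Finset.sum_congr rfl fun i _ => ?_
      rw [mul_comm]
      exact (hsq i j).symm
    exact_mod_cast h3
  exact klein_num p q c hppos hqpos (fun i j => Complex.normSq_nonneg _) hrow hcol hp1 hq1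

section PT
variable {a b : Type*} [Fintype a] [DecidableEq a] [Fintype b] [DecidableEq b]

lemma trace_kron_left (ρ : Matrix (a × b) (a × b) ℂ) (ρA : Matrix a a ℂ)
    (hρA : ∀ i i', ρA i i' = ∑ j, ρ (i, j) (i', j)) (X : Matrix a a ℂ) :
    Matrix.trace (ρ * (X ⊗ₖ (1 : Matrix b b ℂ))) = Matrix.trace (ρA * X) := by
  rw [Matrix.trace, Matrix.trace]
  simp only [Matrix.diag_apply, Matrix.mul_apply, Matrix.kroneckerMap_apply,
    Matrix.one_apply, hρA, Fintype.sum_prod_type, mul_ite, mul_one, mul_zero, ite_mul,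
    one_mul, zero_mul, Finset.sum_ite_eq, Finset.sum_ite_eq', Finset.mem_univ, if_true,
    Finset.sum_mul]
  exact Finset.sum_congr rfl fun x _ => Finset.sum_comm

lemma trace_kron_right (ρ : Matrix (a × b) (a × b) ℂ) (ρB : Matrix b b ℂ)
    (hρB : ∀ j j', ρB j j' = ∑ i, ρ (i, j) (i, j')) (Y : Matrix b b ℂ) :
    Matrix.trace (ρ * ((1 : Matrix a a ℂ) ⊗ₖ Y)) = Matrix.trace (ρB * Y) := by
  rw [Matrix.trace, Matrix.trace]
  simp only [Matrix.diag_apply, Matrix.mul_apply, Matrix.kroneckerMap_apply,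
    Matrix.one_apply, hρB, Fintype.sum_prod_type, ite_mul, one_mul, zero_mul, mul_ite,
    mul_one, mul_zero, Finset.sum_ite_eq, Finset.sum_ite_eq', Finset.mem_univ, if_true,
    Finset.sum_mul]
  have step : ∀ (x : a) (x1 : b),
      (∑ x2 : a, ∑ x3 : b, if x2 = x then ρ (x, x1) (x2, x3) * Y x3 x1 else 0)
      = ∑ x3 : b, ρ (x, x1) (x, x3) * Y x3 x1 := by
    intro x x1
    rw [Finset.sum_comm]
    refine Finset.sum_congr rfl fun x3 _ => ?_
    simp
  have m0 : (∑ x : a, ∑ x1 : b, ∑ x2 : a, ∑ x3 : b,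
        if x2 = x then ρ (x, x1) (x2, x3) * Y x3 x1 else 0)
      = ∑ x : a, ∑ x1 : b, ∑ x3 : b, ρ (x, x1) (x, x3) * Y x3 x1 :=
    Finset.sum_congr rfl fun x _ => Finset.sum_congr rfl fun x1 _ => step x x1
  rw [m0]
  have m1 : (∑ x : a, ∑ x1 : b, ∑ x3 : b, ρ (x, x1) (x, x3) * Y x3 x1)
      = ∑ x1 : b, ∑ x : a, ∑ x3 : b, ρ (x, x1) (x, x3) * Y x3 x1 := Finset.sum_comm
  rw [m1]
  exact Finset.sum_congr rfl fun x1 _ => Finset.sum_comm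

lemma sum_gadget {γ δ : Type*} [Fintype γ] [Fintype δ] [DecidableEq γ]
    (i : γ) (f : γ → δ → ℂ) :
    (∑ g : γ, ∑ d : δ, if g = i then f g d else 0) = ∑ d : δ, f i d := by
  rw [Finset.sum_comm]
  refine (Finset.sum_congr rfl fun d _ => ?_).trans rfl
  simp

lemma marginal_A_posDef [Nonempty b] {ρ : Matrix (a × b) (a × b) ℂ} (hρ : ρ.PosDef)
    (ρA : Matrix a a ℂ) (h : ∀ i i', ρA i i' = ∑ j, ρ (i, j) (i', j)) : ρA.PosDef := by
  rw [Matrix.posDef_iff_dotProduct_mulVec]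
  constructor
  · ext i i'
    rw [Matrix.conjTranspose_apply, h, h, star_sum]
    exact Finset.sum_congr rfl fun j _ => hρ.1.apply (i, j) (i', j)
  · intro x hx
    set z : b → (a × b) → ℂ := fun j p => if p.2 = j then x p.1 else 0 with hz
    have hzne : ∀ j, z j ≠ 0 := by
      intro j hcon
      apply hx
      funext i
      have := congrFun hcon (i, j)
      simpa [hz] using this
    have inner : ∀ (j : b) (p : a × b), (ρ *ᵥ (z j)) p = ∑ i2 : a, ρ p (i2, j) * x i2 := by
      intro j p
      simp only [Matrix.mulVec, dotProduct, hz, Fintype.sum_prod_type, mul_ite, mul_zero]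
      simp
    have rhsEq : ∀ j : b, dotProduct (star (z j)) (ρ *ᵥ (z j))
        = ∑ i1 : a, ∑ i2 : a, star (x i1) * (ρ (i1, j) (i2, j) * x i2) := by
      intro j
      calc dotProduct (star (z j)) (ρ *ᵥ (z j))
          = ∑ i1 : a, ∑ l : b, star (z j (i1, l)) * (ρ *ᵥ (z j)) (i1, l) :=
            Fintype.sum_prod_type _
        _ = ∑ i1 : a, ∑ l : b, (if l = j then star (x i1) * (ρ *ᵥ (z j)) (i1, l) else 0) := by
            refine Finset.sum_congr rfl fun i1 _ => Finset.sum_congr rfl fun l _ => ?_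
            by_cases hc : l = j <;> simp [hz, hc]
        _ = ∑ i1 : a, star (x i1) * (ρ *ᵥ (z j)) (i1, j) := by
            refine Finset.sum_congr rfl fun i1 _ => ?_
            simp
        _ = ∑ i1 : a, ∑ i2 : a, star (x i1) * (ρ (i1, j) (i2, j) * x i2) := by
            refine Finset.sum_congr rfl fun i1 _ => ?_
            rw [inner j (i1, j), Finset.mul_sum]
    have hsum : dotProduct (star x) (ρA *ᵥ x) = ∑ j, dotProduct (star (z j)) (ρ *ᵥ (z j)) := by
      calc dotProduct (star x) (ρA *ᵥ x)
          = ∑ i1 : a, ∑ i2 : a, ∑ j : b, star (x i1) * (ρ (i1, j) (i2, j) * x i2) := by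
            simp only [dotProduct, Matrix.mulVec, Pi.star_apply, h, Finset.sum_mul,
              Finset.mul_sum]
        _ = ∑ j : b, ∑ i1 : a, ∑ i2 : a, star (x i1) * (ρ (i1, j) (i2, j) * x i2) :=
            (Finset.sum_congr rfl fun _ _ => Finset.sum_comm).trans Finset.sum_comm
        _ = ∑ j, dotProduct (star (z j)) (ρ *ᵥ (z j)) :=
            Finset.sum_congr rfl fun j _ => (rhsEq j).symm
    rw [hsum]
    exact Finset.sum_pos (fun j _ => hρ.dotProduct_mulVec_pos (hzne j)) Finset.univ_nonempty

lemma marginal_B_posDef [Nonempty a] {ρ : Matrix (a × b) (a × b) ℂ} (hρ : ρ.PosDef)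
    (ρB : Matrix b b ℂ) (h : ∀ j j', ρB j j' = ∑ i, ρ (i, j) (i, j')) : ρB.PosDef := by
  rw [Matrix.posDef_iff_dotProduct_mulVec]
  constructor
  · ext j j'
    rw [Matrix.conjTranspose_apply, h, h, star_sum]
    exact Finset.sum_congr rfl fun i _ => hρ.1.apply (i, j) (i, j')
  · intro x hx
    set z : a → (a × b) → ℂ := fun i p => if p.1 = i then x p.2 else 0 with hz
    have hzne : ∀ i, z i ≠ 0 := by
      intro i hcon
      apply hx
      funext j
      have := congrFun hcon (i, j)
      simpa [hz] using this
    have inner : ∀ (i : a) (p : a × b), (ρ *ᵥ (z i)) p = ∑ j2 : b, ρ p (i, j2) * x j2 := by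
      intro i p
      simp only [Matrix.mulVec, dotProduct, hz, Fintype.sum_prod_type, mul_ite, mul_zero]
      exact sum_gadget i _
    have rhsEq : ∀ i : a, dotProduct (star (z i)) (ρ *ᵥ (z i))
        = ∑ j1 : b, ∑ j2 : b, star (x j1) * (ρ (i, j1) (i, j2) * x j2) := by
      intro i
      calc dotProduct (star (z i)) (ρ *ᵥ (z i))
          = ∑ α : a, ∑ j1 : b, star (z i (α, j1)) * (ρ *ᵥ (z i)) (α, j1) :=
            Fintype.sum_prod_type _
        _ = ∑ α : a, ∑ j1 : b, (if α = i then star (x j1) * (ρ *ᵥ (z i)) (α, j1) else 0) := by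
            refine Finset.sum_congr rfl fun α _ => Finset.sum_congr rfl fun j1 _ => ?_
            by_cases hc : α = i <;> simp [hz, hc]
        _ = ∑ j1 : b, star (x j1) * (ρ *ᵥ (z i)) (i, j1) := sum_gadget i _
        _ = ∑ j1 : b, ∑ j2 : b, star (x j1) * (ρ (i, j1) (i, j2) * x j2) := by
            refine Finset.sum_congr rfl fun j1 _ => ?_
            rw [inner i (i, j1), Finset.mul_sum]
    have hsum : dotProduct (star x) (ρB *ᵥ x) = ∑ i, dotProduct (star (z i)) (ρ *ᵥ (z i)) := by
      calc dotProduct (star x) (ρB *ᵥ x)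
          = ∑ j1 : b, ∑ j2 : b, ∑ i : a, star (x j1) * (ρ (i, j1) (i, j2) * x j2) := by
            simp only [dotProduct, Matrix.mulVec, Pi.star_apply, h, Finset.sum_mul,
              Finset.mul_sum]
        _ = ∑ i : a, ∑ j1 : b, ∑ j2 : b, star (x j1) * (ρ (i, j1) (i, j2) * x j2) :=
            (Finset.sum_congr rfl fun _ _ => Finset.sum_comm).trans Finset.sum_comm
        _ = ∑ i, dotProduct (star (z i)) (ρ *ᵥ (z i)) :=
            Finset.sum_congr rfl fun i _ => (rhsEq i).symm
    rw [hsum]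
    exact Finset.sum_pos (fun i _ => hρ.dotProduct_mulVec_pos (hzne i)) Finset.univ_nonempty

lemma marginal_A_trace {ρ : Matrix (a × b) (a × b) ℂ}
    (ρA : Matrix a a ℂ) (h : ∀ i i', ρA i i' = ∑ j, ρ (i, j) (i', j)) :
    ρA.trace = ρ.trace := by
  rw [Matrix.trace, Matrix.trace]
  simp [Matrix.diag_apply, h, Fintype.sum_prod_type]

lemma marginal_B_trace {ρ : Matrix (a × b) (a × b) ℂ}
    (ρB : Matrix b b ℂ) (h : ∀ j j', ρB j j' = ∑ i, ρ (i, j) (i, j')) :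
    ρB.trace = ρ.trace := by
  rw [Matrix.trace, Matrix.trace]
  rw [Fintype.sum_prod_type, Finset.sum_comm]
  simp [Matrix.diag_apply, h]

end PT

/-- For a bipartite state `ρ` with marginals `ρ_A, ρ_B`, and product states `σ ⊗ τ`:
`S(ρ ‖ σ ⊗ τ) ≥ S(ρ ‖ ρ_A ⊗ ρ_B) = I(A : B)_ρ`. -/
theorem stmt19 (dA dB : ℕ) (hdA : 1 ≤ dA) (hdB : 1 ≤ dB)
    (ρ : Matrix (Fin dA × Fin dB) (Fin dA × Fin dB) ℂ)
    (hρ : ρ.PosDef) (hρ1 : ρ.trace = 1)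
    (σ : Matrix (Fin dA) (Fin dA) ℂ) (hσ : σ.PosDef) (hσ1 : σ.trace = 1)
    (τ : Matrix (Fin dB) (Fin dB) ℂ) (hτ : τ.PosDef) (hτ1 : τ.trace = 1)
    (ρA : Matrix (Fin dA) (Fin dA) ℂ)
    (hρA : ∀ i i', ρA i i' = ∑ j, ρ (i, j) (i', j))
    (ρB : Matrix (Fin dB) (Fin dB) ℂ)
    (hρB : ∀ j j', ρB j j' = ∑ i, ρ (i, j) (i, j'))
    (h1 : (σ ⊗ₖ τ).IsHermitian) (h2 : (ρA ⊗ₖ ρB).IsHermitian) :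
    (Matrix.trace (ρ * (hermLog hρ.isHermitian - hermLog h2))).re ≤
      (Matrix.trace (ρ * (hermLog hρ.isHermitian - hermLog h1))).re := by
  haveI : Nonempty (Fin dA) := ⟨⟨0, hdA⟩⟩
  haveI : Nonempty (Fin dB) := ⟨⟨0, hdB⟩⟩
  have hρA' : ρA.PosDef := marginal_A_posDef hρ ρA hρA
  have hρB' : ρB.PosDef := marginal_B_posDef hρ ρB hρB
  have hρA1 : ρA.trace = 1 := by rw [marginal_A_trace ρA hρA, hρ1]
  have hρB1 : ρB.trace = 1 := by rw [marginal_B_trace ρB hρB, hρ1]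
  rw [mul_sub, mul_sub, Matrix.trace_sub, Matrix.trace_sub, Complex.sub_re, Complex.sub_re]
  apply sub_le_sub_left
  rw [hermLog_kron hσ hτ h1, hermLog_kron hρA' hρB' h2]
  rw [mul_add, mul_add, Matrix.trace_add, Matrix.trace_add, Complex.add_re, Complex.add_re]
  rw [trace_kron_left ρ ρA hρA, trace_kron_right ρ ρB hρB,
    trace_kron_left ρ ρA hρA, trace_kron_right ρ ρB hρB]
  exact add_le_add (klein hρA' hσ hρA1 hσ1) (klein hρB' hτ hρB1 hτ1)
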